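/- For every ART (I, U) there exists an equivalent ART (J, V) satisfying: J = {List.replicate n false : n ∈ ℕ}; the family is decreasing, i.e., V j ⊆ V i whenever i, j ∈ J and i.length ≤ j.length; every x ∈ V j with j ∈ J satisfies x.length > j.length; and F(J, V) = F(I, U). -/

import Mathlib

open MeasureTheory Filter

/-- The fair-coin product probability measure on Cantor space `ℕ → Bool`,
constructed as the pushforward of Lebesgue measure on `[0,1)` under binary expansion. -/
noncomputable def mu : Measure (ℕ → Bool) :=
  Measure.map (fun x n => decide (⌊x * 2 ^ (n + 1)⌋ % 2 = 1))
    (volume.restrict (Set.Ico (0 : ℝ) 1))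

/-- Action of a word on a state of an automaton. -/
def act {S A : Type*} (f : S → A → S) (s : S) (w : List A) : S := w.foldl f s

/-- The run of a sequence `X` on the machine `(S, f, s₀)`. -/
def run {S : Type*} (f : S → Bool → S) (s₀ : S) (X : ℕ → Bool) : ℕ → S
  | 0 => s₀
  | n + 1 => f (run f s₀ X n) (X n)

/-- `t` is reachable from `s`. -/
def Reach {S : Type*} (f : S → Bool → S) (s t : S) : Prop := ∃ w : List Bool, act f s w = t

/-- The connected component of a state `s`. -/
def component {S : Type*} (f : S → Bool → S) (s : S) : Set S :=
  {t | Reach f s t ∧ Reach f t s}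

/-- `g` is a leaf connected component. -/
def IsLeafComponent {S : Type*} (f : S → Bool → S) (g : Set S) : Prop :=
  (∃ s, g = component f s) ∧ ∀ s ∈ g, ∀ t, Reach f s t → Reach f t s

/-- The word `w` occurs as a subword of the sequence `X`. -/
def Occurs (w : List Bool) (X : ℕ → Bool) : Prop :=
  ∃ n, ∀ k < w.length, X (n + k) = w.getD k false

/-- `X` is disjunctive: every word occurs in `X` as a subword. -/
def Disjunctive (X : ℕ → Bool) : Prop := ∀ w : List Bool, Occurs w X

/-- The word `w` is a prefix of the sequence `X`. -/
def IsPrefixOfSeq (w : List Bool) (X : ℕ → Bool) : Prop :=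
  ∀ k < w.length, X k = w.getD k false

/-- `[L]`: the set of sequences having some prefix in the language `L`. -/
def cyl (L : Set (List Bool)) : Set (ℕ → Bool) := {X | ∃ w ∈ L, IsPrefixOfSeq w X}

/-- `I(X)`: the set of states visited infinitely often by the run of `X`. -/
def InfOcc {S : Type*} (f : S → Bool → S) (s₀ : S) (X : ℕ → Bool) : Set S :=
  {s | ∃ᶠ n in atTop, run f s₀ X n = s}

/-- `X` is accepted by the deterministic Büchi automaton `(S, f, s₀, F)`. -/
def BuchiAccepts {S : Type*} (f : S → Bool → S) (s₀ : S) (F : Set S) (X : ℕ → Bool) : Prop :=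
  ∃ᶠ n in atTop, run f s₀ X n ∈ F

/-- A language is regular if it is accepted by a DFA with finitely many states. -/
def Regular {A : Type} (L : Set (List A)) : Prop :=
  ∃ (S : Type) (_ : Fintype S) (f : S → A → S) (s₀ : S) (F : Set S),
    L = {w | act f s₀ w ∈ F}

/-- The convolution of two words. -/
def conv (x i : List Bool) : List (Option Bool × Option Bool) :=
  (List.range (max x.length i.length)).map (fun k => (x[k]?, i[k]?))

/-- `(I, U)` is an automatic family. -/
def IsAutomaticFamily (I : Set (List Bool)) (U : List Bool → Set (List Bool)) : Prop :=
  Regular I ∧ Regular {c | ∃ i ∈ I, ∃ x ∈ U i, c = conv x i}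

/-- `(I, U)` is an automatic randomness test (ART). -/
def IsART (I : Set (List Bool)) (U : List Bool → Set (List Bool)) : Prop :=
  IsAutomaticFamily I U ∧ ∀ ε : ENNReal, 0 < ε → ∃ i ∈ I, mu (cyl (U i)) ≤ ε

/-- `(I, U)` is a Martin-Löf automatic randomness test (MART). -/
def IsMART (I : Set (List Bool)) (U : List Bool → Set (List Bool)) : Prop :=
  IsAutomaticFamily I U ∧ I.Infinite ∧
    ∀ i ∈ I, mu (cyl (U i)) ≤ (2 : ENNReal) ^ (-(i.length : ℤ))

/-- The covering region `F(I, U)` of a test. -/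
def coverRegion (I : Set (List Bool)) (U : List Bool → Set (List Bool)) : Set (ℕ → Bool) :=
  ⋂ i ∈ I, cyl (U i)

-- ===================== auxiliary development =====================

theorem act_concat {S A : Type*} (f : S → A → S) (s : S) (w : List A) (a : A) :
    act f s (w ++ [a]) = f (act f s w) a := by
  unfold act; rw [List.foldl_append]; rfl

theorem conv_getElem? (x i : List Bool) (k : ℕ) :
    (conv x i)[k]? = if k < max x.length i.length then some (x[k]?, i[k]?) else none := by
  unfold conv
  rcases Nat.lt_or_ge k (max x.length i.length) with hk | hk
  · rw [if_pos hk, List.getElem?_map, List.getElem?_range hk]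
    rfl
  · rw [if_neg (Nat.not_lt.2 hk)]
    exact List.getElem?_eq_none (by simpa using hk)

theorem conv_nil : conv [] [] = [] := by simp [conv]

theorem conv_concat_left {x i : List Bool} (h : i.length ≤ x.length) (b : Bool) :
    conv (x ++ [b]) i = conv x i ++ [(some b, none)] := by
  unfold conv
  have h1 : max (x ++ [b]).length i.length = x.length + 1 := by
    simp only [List.length_append, List.length_singleton]; omega
  have h2 : max x.length i.length = x.length := by omega
  rw [h1, h2, List.range_succ, List.map_append]
  congr 1
  · apply List.map_congr_left
    intro k hk
    rw [List.mem_range] at hk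
    rw [List.getElem?_append, if_pos hk]
  · simp [List.getElem?_concat_length, List.getElem?_eq_none h]

theorem conv_concat_right {x i : List Bool} (h : x.length ≤ i.length) (b : Bool) :
    conv x (i ++ [b]) = conv x i ++ [(none, some b)] := by
  unfold conv
  have h1 : max x.length (i ++ [b]).length = i.length + 1 := by
    simp only [List.length_append, List.length_singleton]; omega
  have h2 : max x.length i.length = i.length := by omega
  rw [h1, h2, List.range_succ, List.map_append]
  congr 1
  · apply List.map_congr_left
    intro k hk
    rw [List.mem_range] at hk
    rw [List.getElem?_append, if_pos hk]
  · simp [List.getElem?_concat_length, List.getElem?_eq_none h]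

theorem conv_concat_both {x i : List Bool} (h : i.length = x.length) (b b' : Bool) :
    conv (x ++ [b]) (i ++ [b']) = conv x i ++ [(some b, some b')] := by
  unfold conv
  have h1 : max (x ++ [b]).length (i ++ [b']).length = x.length + 1 := by
    simp only [List.length_append, List.length_singleton]; omega
  have h2 : max x.length i.length = x.length := by omega
  rw [h1, h2, List.range_succ, List.map_append]
  congr 1
  · apply List.map_congr_left
    intro k hk
    rw [List.mem_range] at hk
    have hki : k < i.length := by omega
    rw [List.getElem?_append, if_pos hk]
    rw [List.getElem?_append, if_pos hki]
  · have : (i ++ [b'])[x.length]? = some b' := by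
      rw [← h]; exact List.getElem?_concat_length
    simp [List.getElem?_concat_length, this]

theorem conv_injective {x i x' i' : List Bool} (h : conv x i = conv x' i') :
    x = x' ∧ i = i' := by
  have hlen : max x.length i.length = max x'.length i'.length := by
    have := congrArg List.length h
    simpa [conv] using this
  have key : ∀ k : ℕ, x[k]? = x'[k]? ∧ i[k]? = i'[k]? := by
    intro k
    by_cases hk : k < max x.length i.length
    · have h1 := conv_getElem? x i k
      have h2 := conv_getElem? x' i' k
      rw [if_pos hk] at h1
      rw [if_pos (hlen ▸ hk)] at h2
      rw [h] at h1
      have h3 := h1.symm.trans h2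
      simp only [Option.some.injEq, Prod.mk.injEq] at h3
      exact h3
    · push_neg at hk
      constructor
      · rw [List.getElem?_eq_none (le_trans (le_max_left _ _) hk),
          List.getElem?_eq_none (le_trans (le_max_left x'.length i'.length) (hlen ▸ hk))]
      · rw [List.getElem?_eq_none (le_trans (le_max_right _ _) hk),
          List.getElem?_eq_none (le_trans (le_max_right x'.length i'.length) (hlen ▸ hk))]
  exact ⟨List.ext_getElem? fun k => (key k).1, List.ext_getElem? fun k => (key k).2⟩

-- ===================== the automaton =====================

section Automaton

variable {Q R : Type}

abbrev MSt (Q R : Type) : Type := Option (Set (R × Q × Set Q) × Set Q × Bool)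

def Pend (δ : Q → Option Bool × Option Bool → Q) (q0 : Q) (x u : List Bool) : Set Q :=
  {s | ∃ m, m < x.length ∧ s = act δ q0 (conv (x.take m) u)}

def CaS (δ : Q → Option Bool × Option Bool → Q) (q0 : Q) (σ : R → Bool → R) (r0 : R)
    (x : List Bool) : Set (R × Q × Set Q) :=
  {p | ∃ u : List Bool, u.length = x.length ∧
      p = (act σ r0 u, act δ q0 (conv x u), Pend δ q0 x u)}

def DS (δ : Q → Option Bool × Option Bool → Q) (q0 : Q) (FA : Set Q)
    (σ : R → Bool → R) (r0 : R) (FI : Set R) (x : List Bool) (n : ℕ) : Set Q :=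
  {d | ∃ u : List Bool, u.length ≤ n ∧ act σ r0 u ∈ FI ∧
      (∀ m ≤ x.length, act δ q0 (conv (x.take m) u) ∉ FA) ∧ d = act δ q0 (conv x u)}

def stepC (δ : Q → Option Bool × Option Bool → Q) (σ : R → Bool → R) (b : Bool)
    (C : Set (R × Q × Set Q)) : Set (R × Q × Set Q) :=
  {p | ∃ c ∈ C, ∃ b' : Bool,
      p = (σ c.1 b', δ c.2.1 (some b, some b'),
           {s | ∃ t, (t ∈ c.2.2 ∨ t = c.2.1) ∧ s = δ t (none, some b')})}

def newdead (FA : Set Q) (FI : Set R) (C : Set (R × Q × Set Q)) : Set Q :=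
  {q | ∃ c ∈ C, c.1 ∈ FI ∧ c.2.1 ∉ FA ∧ (∀ s ∈ c.2.2, s ∉ FA) ∧ q = c.2.1}

def stepD (δ : Q → Option Bool × Option Bool → Q) (FA : Set Q) (b : Bool) (D : Set Q) : Set Q :=
  {q | (∃ d ∈ D, q = δ d (some b, none)) ∧ q ∉ FA}

def mstep (δ : Q → Option Bool × Option Bool → Q) (FA : Set Q)
    (σ : R → Bool → R) (FI : Set R) : MSt Q R → Option Bool × Option Bool → MSt Q R
  | none, _ => none
  | some (C, D, ph), ℓ =>
    match ℓ, ph with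
    | (some b, none), _ => some (∅, stepD δ FA b D, true)
    | (some b, some false), false =>
        some (stepC δ σ b C, stepD δ FA b D ∪ newdead FA FI (stepC δ σ b C), false)
    | _, _ => none

def ms0 (δ : Q → Option Bool × Option Bool → Q) (q0 : Q) (FA : Set Q) (r0 : R) (FI : Set R) :
    MSt Q R :=
  some ({(r0, q0, ∅)}, {q | q = q0 ∧ r0 ∈ FI ∧ q0 ∉ FA}, false)

variable {δ : Q → Option Bool × Option Bool → Q} {q0 : Q} {FA : Set Q}
  {σ : R → Bool → R} {r0 : R} {FI : Set R}

theorem mstep_none (ℓ : Option Bool × Option Bool) : mstep δ FA σ FI none ℓ = none := rfl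

theorem mstep_bd (C : Set (R × Q × Set Q)) (D : Set Q) (ph : Bool) (b : Bool) :
    mstep δ FA σ FI (some (C, D, ph)) (some b, none) = some (∅, stepD δ FA b D, true) := by
  cases ph <;> rfl

theorem mstep_p1 (C : Set (R × Q × Set Q)) (D : Set Q) (b : Bool) :
    mstep δ FA σ FI (some (C, D, false)) (some b, some false) =
      some (stepC δ σ b C, stepD δ FA b D ∪ newdead FA FI (stepC δ σ b C), false) := rfl

theorem mstep_p1t (C : Set (R × Q × Set Q)) (D : Set Q) (b : Bool) :
    mstep δ FA σ FI (some (C, D, true)) (some b, some false) = none := rfl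

theorem mstep_st (C : Set (R × Q × Set Q)) (D : Set Q) (ph : Bool) (b : Bool) :
    mstep δ FA σ FI (some (C, D, ph)) (some b, some true) = none := by
  cases ph <;> rfl

theorem mstep_n1 (C : Set (R × Q × Set Q)) (D : Set Q) (ph : Bool) (o : Option Bool) :
    mstep δ FA σ FI (some (C, D, ph)) (none, o) = none := by
  cases ph <;> cases o <;> rfl

theorem PendLemma (x u : List Bool) (hu : u.length = x.length) (b b' : Bool) :
    Pend δ q0 (x ++ [b]) (u ++ [b']) =
      {s | ∃ t, (t ∈ Pend δ q0 x u ∨ t = act δ q0 (conv x u)) ∧ s = δ t (none, some b')} := by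
  ext s
  simp only [Pend, Set.mem_setOf_eq]
  constructor
  · rintro ⟨m, hm, rfl⟩
    have hm' : m ≤ x.length := by
      simp only [List.length_append, List.length_singleton] at hm; omega
    have htake : (x ++ [b]).take m = x.take m := List.take_append_of_le_length hm'
    have hconv : conv ((x ++ [b]).take m) (u ++ [b']) = conv (x.take m) u ++ [(none, some b')] := by
      rw [htake]
      exact conv_concat_right (by simp only [List.length_take]; omega) b'
    rcases Nat.lt_or_ge m x.length with hlt | hge
    · exact ⟨act δ q0 (conv (x.take m) u), Or.inl ⟨m, hlt, rfl⟩, by rw [hconv, act_concat]⟩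
    · have hme : m = x.length := le_antisymm hm' hge
      subst hme
      refine ⟨act δ q0 (conv x u), Or.inr rfl, ?_⟩
      rw [hconv, act_concat, List.take_length]
  · rintro ⟨t, ht, rfl⟩
    rcases ht with ⟨m, hm, rfl⟩ | rfl
    · refine ⟨m, by simp only [List.length_append, List.length_singleton]; omega, ?_⟩
      rw [List.take_append_of_le_length (le_of_lt hm),
        conv_concat_right (by simp only [List.length_take]; omega) b', act_concat]
    · refine ⟨x.length, by simp only [List.length_append, List.length_singleton]; omega, ?_⟩
      rw [List.take_append_of_le_length le_rfl, List.take_length,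
        conv_concat_right (by omega) b', act_concat]

theorem E1 (x : List Bool) (b : Bool) :
    stepC δ σ b (CaS δ q0 σ r0 x) = CaS δ q0 σ r0 (x ++ [b]) := by
  ext p
  simp only [stepC, CaS, Set.mem_setOf_eq]
  constructor
  · rintro ⟨c, ⟨u, hu, rfl⟩, b', rfl⟩
    refine ⟨u ++ [b'], by simp [hu], ?_⟩
    rw [act_concat, conv_concat_both hu, act_concat, PendLemma x u hu b b']
  · rintro ⟨u', hu', rfl⟩
    rcases u'.eq_nil_or_concat with rfl | ⟨u, b', rfl⟩
    · simp at hu'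
    · rw [List.concat_eq_append] at hu' ⊢
      have hu : u.length = x.length := by
        simp only [List.length_append, List.length_singleton] at hu'; omega
      refine ⟨(act σ r0 u, act δ q0 (conv x u), Pend δ q0 x u), ⟨u, hu, rfl⟩, b', ?_⟩
      rw [act_concat, conv_concat_both hu, act_concat, PendLemma x u hu b b']

theorem E4 (x : List Bool) (n : ℕ) (hn : n ≤ x.length) (b : Bool) :
    stepD δ FA b (DS δ q0 FA σ r0 FI x n) = DS δ q0 FA σ r0 FI (x ++ [b]) n := by
  ext q
  simp only [stepD, DS, Set.mem_setOf_eq]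
  constructor
  · rintro ⟨⟨d, ⟨u, hu, hFIu, hchk, rfl⟩, rfl⟩, hq⟩
    have hul : u.length ≤ x.length := le_trans hu hn
    have hconv : conv (x ++ [b]) u = conv x u ++ [(some b, none)] := conv_concat_left hul b
    refine ⟨u, hu, hFIu, ?_, by rw [hconv, act_concat]⟩
    intro m hm
    rcases Nat.lt_or_ge m (x.length + 1) with hlt | hge
    · have hmx : m ≤ x.length := Nat.lt_succ_iff.mp hlt
      rw [List.take_append_of_le_length hmx]
      exact hchk m hmx
    · have hme : m = x.length + 1 := by
        simp only [List.length_append, List.length_singleton] at hm; omega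
      subst hme
      rw [List.take_of_length_le (by simp), hconv, act_concat]
      exact hq
  · rintro ⟨u, hu, hFIu, hchk, rfl⟩
    have hul : u.length ≤ x.length := le_trans hu hn
    have hconv : conv (x ++ [b]) u = conv x u ++ [(some b, none)] := conv_concat_left hul b
    refine ⟨⟨act δ q0 (conv x u), ⟨u, hu, hFIu, ?_, rfl⟩, by rw [hconv, act_concat]⟩, ?_⟩
    · intro m hm
      have h2 := hchk m (by simp only [List.length_append, List.length_singleton]; omega)
      rwa [List.take_append_of_le_length hm] at h2
    · have h2 := hchk (x.length + 1) (by simp)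
      rwa [List.take_of_length_le (by simp)] at h2

theorem checks_iff (x u : List Bool) :
    (∀ m ≤ x.length, act δ q0 (conv (x.take m) u) ∉ FA) ↔
      (act δ q0 (conv x u) ∉ FA ∧ ∀ s ∈ Pend δ q0 x u, s ∉ FA) := by
  constructor
  · intro hc
    refine ⟨by have := hc x.length le_rfl; rwa [List.take_length] at this, ?_⟩
    rintro s ⟨m, hm, rfl⟩
    exact hc m (le_of_lt hm)
  · rintro ⟨h1, h2⟩ m hm
    rcases Nat.lt_or_ge m x.length with hlt | hge
    · exact h2 _ ⟨m, hlt, rfl⟩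
    · have : m = x.length := le_antisymm hm hge
      subst this
      rwa [List.take_length]

theorem E5 (x : List Bool) (k : ℕ) (hx : x.length = k + 1) :
    DS δ q0 FA σ r0 FI x (k + 1) =
      DS δ q0 FA σ r0 FI x k ∪ newdead FA FI (CaS δ q0 σ r0 x) := by
  ext d
  simp only [DS, newdead, CaS, Set.mem_union, Set.mem_setOf_eq]
  constructor
  · rintro ⟨u, hu, hFIu, hchk, rfl⟩
    rcases Nat.lt_or_ge u.length (k + 1) with hlt | hge
    · exact Or.inl ⟨u, Nat.lt_succ_iff.mp hlt, hFIu, hchk, rfl⟩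
    · have hlen : u.length = x.length := by omega
      right
      exact ⟨(act σ r0 u, act δ q0 (conv x u), Pend δ q0 x u), ⟨u, hlen, rfl⟩, hFIu,
        ((checks_iff x u).mp hchk).1, ((checks_iff x u).mp hchk).2, rfl⟩
  · rintro (⟨u, hu, hFIu, hchk, rfl⟩ | ⟨c, ⟨u, hlen, rfl⟩, hFIu, h1, h2, rfl⟩)
    · exact ⟨u, le_trans hu (Nat.le_succ k), hFIu, hchk, rfl⟩
    · exact ⟨u, by omega, hFIu, (checks_iff x u).mpr ⟨h1, h2⟩, rfl⟩

theorem ms0_eq : (ms0 δ q0 FA r0 FI : MSt Q R) =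
    some (CaS δ q0 σ r0 [], DS δ q0 FA σ r0 FI [] 0, false) := by
  unfold ms0
  congr 1
  refine congrArg₂ (fun a b => (a, b, false)) ?_ ?_
  · ext p
    simp only [CaS, Set.mem_setOf_eq, Set.mem_singleton_iff]
    constructor
    · rintro rfl
      refine ⟨[], rfl, ?_⟩
      rw [conv_nil]
      have : Pend δ q0 ([] : List Bool) ([] : List Bool) = ∅ := by
        ext s; simp [Pend]
      rw [this]
      rfl
    · rintro ⟨u, hu, rfl⟩
      have : u = [] := List.eq_nil_of_length_eq_zero hu
      subst this
      rw [conv_nil]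
      have : Pend δ q0 ([] : List Bool) ([] : List Bool) = ∅ := by
        ext s; simp [Pend]
      rw [this]
      rfl
  · ext q
    simp only [DS, Set.mem_setOf_eq]
    constructor
    · rintro ⟨rfl, hFIu, hq⟩
      refine ⟨[], le_rfl, hFIu, ?_, by rw [conv_nil]; rfl⟩
      intro m hm
      have : m = 0 := Nat.le_zero.mp hm
      subst this
      simpa [conv_nil, act] using hq
    · rintro ⟨u, hu, hFIu, hchk, rfl⟩
      have : u = [] := List.eq_nil_of_length_eq_zero (Nat.le_zero.mp hu)
      subst this
      refine ⟨by rw [conv_nil]; rfl, hFIu, ?_⟩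
      have := hchk 0 le_rfl
      simpa [conv_nil, act] using this

theorem A1 (x : List Bool) :
    act (mstep δ FA σ FI) (ms0 δ q0 FA r0 FI) (conv x (List.replicate x.length false)) =
      some (CaS δ q0 σ r0 x, DS δ q0 FA σ r0 FI x x.length, false) := by
  induction x using List.reverseRecOn with
  | nil =>
    have : conv [] (List.replicate 0 false) = [] := by rw [List.replicate_zero]; exact conv_nil
    rw [List.length_nil, this]
    exact ms0_eq
  | append_singleton x b ih =>
    have hlen : (x ++ [b]).length = x.length + 1 := by simp
    rw [hlen, List.replicate_succ',
      conv_concat_both (by simp) b false, act_concat, ih, mstep_p1, E1,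
      E4 x x.length le_rfl b, E5 (x ++ [b]) x.length (by simp)]

theorem A2 (x : List Bool) (n : ℕ) :
    n < x.length →
    act (mstep δ FA σ FI) (ms0 δ q0 FA r0 FI) (conv x (List.replicate n false)) =
      some (∅, DS δ q0 FA σ r0 FI x n, true) := by
  induction x using List.reverseRecOn with
  | nil => intro hn; simp at hn
  | append_singleton x b ih =>
    intro hn
    rcases Nat.lt_or_ge n x.length with hlt | hge
    · rw [conv_concat_left (by simp only [List.length_replicate]; omega) b, act_concat,
        ih hlt, mstep_bd, E4 x n (le_of_lt hlt) b]
    · have hxn : n = x.length := by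
        simp only [List.length_append, List.length_singleton] at hn; omega
      subst hxn
      rw [conv_concat_left (by simp) b, act_concat, A1, mstep_bd, E4 x x.length le_rfl b]

theorem shape (c : List (Option Bool × Option Bool)) :
    ∀ C D ph, act (mstep δ FA σ FI) (ms0 δ q0 FA r0 FI) c = some (C, D, ph) →
      (ph = false → ∃ x : List Bool, c = conv x (List.replicate x.length false)) ∧
      (ph = true → ∃ x n, n < x.length ∧ c = conv x (List.replicate n false)) := by
  induction c using List.reverseRecOn with
  | nil =>
    intro C D ph h
    have h' : (ms0 δ q0 FA r0 FI : MSt Q R) = some (C, D, ph) := h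
    unfold ms0 at h'
    injection h' with h''
    rw [Prod.mk.injEq, Prod.mk.injEq] at h''
    obtain ⟨-, -, hph⟩ := h''
    constructor
    · intro _
      exact ⟨[], by rw [List.length_nil, List.replicate_zero, conv_nil]⟩
    · intro hph'
      rw [← hph] at hph'
      exact absurd hph' (by simp)
  | append_singleton c ℓ ih =>
    intro C D ph h
    rw [act_concat] at h
    rcases hprev : act (mstep δ FA σ FI) (ms0 δ q0 FA r0 FI) c with _ | ⟨C', D', ph'⟩
    · rw [hprev, mstep_none] at h
      exact absurd h (by simp)
    · rw [hprev] at h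
      have IH := ih C' D' ph' hprev
      obtain ⟨b1, b2⟩ := ℓ
      cases b1 with
      | none =>
        rw [mstep_n1] at h
        exact absurd h (by simp)
      | some b =>
        cases b2 with
        | none =>
          rw [mstep_bd] at h
          injection h with h''
          rw [Prod.mk.injEq, Prod.mk.injEq] at h''
          obtain ⟨hC, hD, hph⟩ := h''
          constructor
          · intro hf
            rw [← hph] at hf
            exact absurd hf (by simp)
          · intro _
            cases ph' with
            | false =>
              obtain ⟨x, rfl⟩ := IH.1 rfl
              exact ⟨x ++ [b], x.length, by simp,
                by rw [conv_concat_left (by simp) b]⟩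
            | true =>
              obtain ⟨x, n, hn, rfl⟩ := IH.2 rfl
              refine ⟨x ++ [b], n, by simp only [List.length_append, List.length_singleton]; omega,
                ?_⟩
              rw [conv_concat_left (by simp only [List.length_replicate]; omega) b]
        | some b2 =>
          cases b2 with
          | true =>
            rw [mstep_st] at h
            exact absurd h (by simp)
          | false =>
            cases ph' with
            | true =>
              rw [mstep_p1t] at h
              exact absurd h (by simp)
            | false =>
              rw [mstep_p1] at h
              injection h with h''
              rw [Prod.mk.injEq, Prod.mk.injEq] at h''
              obtain ⟨hC, hD, hph⟩ := h''
              constructor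
              · intro _
                obtain ⟨x, rfl⟩ := IH.1 rfl
                refine ⟨x ++ [b], ?_⟩
                rw [show (x ++ [b]).length = x.length + 1 by simp, List.replicate_succ',
                  conv_concat_both (by simp) b false]
              · intro hph'
                rw [← hph] at hph'
                exact absurd hph' (by simp)

theorem DS_empty_iff (x : List Bool) (n : ℕ) :
    DS δ q0 FA σ r0 FI x n = ∅ ↔
      ∀ u : List Bool, u.length ≤ n → act σ r0 u ∈ FI →
        ∃ m, m ≤ x.length ∧ act δ q0 (conv (x.take m) u) ∈ FA := by
  constructor
  · intro hD u hu hFIu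
    by_contra hc
    push_neg at hc
    have hmem : act δ q0 (conv x u) ∈ DS δ q0 FA σ r0 FI x n :=
      ⟨u, hu, hFIu, fun m hm => hc m hm, rfl⟩
    rw [hD] at hmem
    exact hmem
  · intro hall
    rw [Set.eq_empty_iff_forall_notMem]
    rintro d ⟨u, hu, hFIu, hchk, rfl⟩
    obtain ⟨m, hm, hFA⟩ := hall u hu hFIu
    exact hchk m hm hFA

theorem regMain {Q R : Type} [Fintype Q] [Fintype R]
    (δ : Q → Option Bool × Option Bool → Q) (q0 : Q) (FA : Set Q)
    (σ : R → Bool → R) (r0 : R) (FI : Set R) :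
    Regular {c : List (Option Bool × Option Bool) | ∃ n : ℕ, ∃ x : List Bool, n < x.length ∧
      (∀ u : List Bool, u.length ≤ n → act σ r0 u ∈ FI →
        ∃ m, m ≤ x.length ∧ act δ q0 (conv (x.take m) u) ∈ FA) ∧
      c = conv x (List.replicate n false)} := by
  haveI : Finite (MSt Q R) := by infer_instance
  refine ⟨MSt Q R, Fintype.ofFinite _, mstep δ FA σ FI, ms0 δ q0 FA r0 FI,
    {s | ∃ C, s = some (C, (∅ : Set Q), true)}, ?_⟩
  ext c
  simp only [Set.mem_setOf_eq]
  constructor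
  · rintro ⟨n, x, hn, hcond, rfl⟩
    refine ⟨∅, ?_⟩
    rw [A2 x n hn, (DS_empty_iff x n).mpr hcond]
  · rintro ⟨C, hC⟩
    obtain ⟨x, n, hn, rfl⟩ := (shape c C ∅ true hC).2 rfl
    have hA := A2 (δ := δ) (q0 := q0) (FA := FA) (σ := σ) (r0 := r0) (FI := FI) x n hn
    rw [hC] at hA
    injection hA with hA'
    rw [Prod.mk.injEq, Prod.mk.injEq] at hA'
    exact ⟨n, x, hn, (DS_empty_iff x n).mp hA'.2.1.symm, rfl⟩

-- ===================== prefix lemmas =====================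

def pref (X : ℕ → Bool) (m : ℕ) : List Bool := (List.range m).map X

theorem pref_length (X : ℕ → Bool) (m : ℕ) : (pref X m).length = m := by simp [pref]

theorem pref_isPrefixOfSeq (X : ℕ → Bool) (m : ℕ) : IsPrefixOfSeq (pref X m) X := by
  intro k hk
  rw [pref_length] at hk
  rw [List.getD_eq_getElem _ _ (by rw [pref_length]; exact hk)]
  simp [pref]

theorem prefixSeq_eq {w : List Bool} {X : ℕ → Bool} (h : IsPrefixOfSeq w X) :
    w = pref X w.length := by
  apply List.ext_getElem (by rw [pref_length])
  intro k h1 h2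
  have := h k h1
  rw [List.getD_eq_getElem _ _ h1] at this
  rw [← this]
  simp [pref]

theorem pref_mono (X : ℕ → Bool) {a b : ℕ} (h : a ≤ b) : pref X a <+: pref X b := by
  rw [List.prefix_iff_eq_take, pref_length]
  unfold pref
  rw [← List.map_take, List.take_range, min_eq_left h]

theorem prefix_seq_mono {w x : List Bool} {X : ℕ → Bool} (hwx : w <+: x)
    (hx : IsPrefixOfSeq x X) : IsPrefixOfSeq w X := by
  intro k hk
  obtain ⟨t, rfl⟩ := hwx
  have hkx : k < (w ++ t).length := by simp; omega
  rw [hx k hkx]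
  rw [List.getD_eq_getElem _ _ hkx, List.getD_eq_getElem _ _ hk]
  exact List.getElem_append_left hk

-- ===================== J is regular =====================

theorem act_andNot (w : List Bool) : ∀ s : Bool,
    act (fun s b => s && !b) s w = (s && w.all fun b => !b) := by
  induction w with
  | nil => intro s; simp [act]
  | cons a w ihw =>
    intro s
    show act (fun s b => s && !b) (s && !a) w = _
    rw [ihw]
    simp [List.all_cons, Bool.and_assoc]

theorem regular_J :
    Regular {w : List Bool | ∃ n : ℕ, w = List.replicate n false} := by
  refine ⟨Bool, inferInstance, fun s b => s && !b, true, {true}, ?_⟩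
  ext w
  simp only [Set.mem_setOf_eq, Set.mem_singleton_iff, act_andNot, Bool.true_and,
    List.all_eq_true]
  constructor
  · rintro ⟨n, rfl⟩
    intro b hb
    rw [List.eq_of_mem_replicate hb]
    rfl
  · intro hw
    refine ⟨w.length, List.eq_replicate_iff.mpr ⟨rfl, fun b hb => ?_⟩⟩
    have := hw b hb
    simpa using this

/-- Every ART has an equivalent ART indexed by `{0^n : n ∈ ℕ}` which is
decreasing and whose `j`-th member contains only words longer than `j`. -/
theorem stmt14 (I : Set (List Bool)) (U : List Bool → Set (List Bool)) (h : IsART I U) :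
    ∃ (J : Set (List Bool)) (V : List Bool → Set (List Bool)),
      IsART J V ∧
      J = {w : List Bool | ∃ n : ℕ, w = List.replicate n false} ∧
      (∀ i ∈ J, ∀ j ∈ J, i.length ≤ j.length → V j ⊆ V i) ∧
      (∀ j ∈ J, ∀ x ∈ V j, x.length > j.length) ∧
      coverRegion J V = coverRegion I U := by
  classical
  obtain ⟨⟨hRegI, hRegL⟩, hMeas⟩ := h
  obtain ⟨R, fR, σ, r0, FI, hI⟩ := hRegI
  obtain ⟨Q, fQ, δ, q0, FA, hL⟩ := hRegL
  haveI := fR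
  haveI := fQ
  refine ⟨{w : List Bool | ∃ n : ℕ, w = List.replicate n false},
    fun j => {x | j.length < x.length ∧ ∀ i ∈ I, i.length ≤ j.length → ∃ w, w <+: x ∧ w ∈ U i},
    ⟨⟨regular_J, ?_⟩, ?_⟩, rfl, ?_, ?_, ?_⟩
  · -- Regular conv language
    have bridge : ∀ w i : List Bool, (i ∈ I ∧ w ∈ U i) ↔ act δ q0 (conv w i) ∈ FA := by
      intro w i
      constructor
      · rintro ⟨hiI, hwU⟩
        have hmem : conv w i ∈ {c | ∃ i ∈ I, ∃ x ∈ U i, c = conv x i} := ⟨i, hiI, w, hwU, rfl⟩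
        rwa [hL] at hmem
      · intro hFA
        have hmem : conv w i ∈ {c | ∃ i ∈ I, ∃ x ∈ U i, c = conv x i} := by
          rw [hL]; exact hFA
        obtain ⟨i', hi', w', hw', heq⟩ := hmem
        obtain ⟨rfl, rfl⟩ := conv_injective heq
        exact ⟨hi', hw'⟩
    have hset : {c | ∃ j ∈ {w : List Bool | ∃ n : ℕ, w = List.replicate n false},
        ∃ x ∈ {x | j.length < x.length ∧
          ∀ i ∈ I, i.length ≤ j.length → ∃ w, w <+: x ∧ w ∈ U i}, c = conv x j} =
        {c : List (Option Bool × Option Bool) | ∃ n : ℕ, ∃ x : List Bool, n < x.length ∧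
          (∀ u : List Bool, u.length ≤ n → act σ r0 u ∈ FI →
            ∃ m, m ≤ x.length ∧ act δ q0 (conv (x.take m) u) ∈ FA) ∧
          c = conv x (List.replicate n false)} := by
      ext c
      simp only [Set.mem_setOf_eq]
      constructor
      · rintro ⟨j, ⟨n, rfl⟩, x, ⟨hlen, hcov⟩, rfl⟩
        rw [List.length_replicate] at hlen
        refine ⟨n, x, hlen, ?_, rfl⟩
        intro u hu hFIu
        have huI : u ∈ I := by rw [hI]; exact hFIu
        obtain ⟨w, hwx, hwU⟩ := hcov u huI (by rw [List.length_replicate]; exact hu)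
        refine ⟨w.length, hwx.length_le, ?_⟩
        have hwt : w = x.take w.length := List.prefix_iff_eq_take.mp hwx
        rw [← hwt]
        exact (bridge w u).mp ⟨huI, hwU⟩
      · rintro ⟨n, x, hn, hcond, rfl⟩
        refine ⟨List.replicate n false, ⟨n, rfl⟩, x,
          ⟨by rw [List.length_replicate]; exact hn, ?_⟩, rfl⟩
        intro i hiI hile
        rw [List.length_replicate] at hile
        obtain ⟨m, hm, hFA⟩ := hcond i hile (by rw [hI] at hiI; exact hiI)
        exact ⟨x.take m, List.take_prefix m x, ((bridge (x.take m) i).mpr hFA).2⟩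
    rw [hset]
    exact regMain δ q0 FA σ r0 FI
  · -- measure condition
    intro ε hε
    obtain ⟨i, hiI, hile⟩ := hMeas ε hε
    refine ⟨List.replicate i.length false, ⟨i.length, rfl⟩, le_trans (measure_mono ?_) hile⟩
    rintro X ⟨x, ⟨hlen, hcov⟩, hpre⟩
    obtain ⟨w, hwx, hwU⟩ := hcov i hiI (by rw [List.length_replicate])
    exact ⟨w, hwU, prefix_seq_mono hwx hpre⟩
  · -- decreasing
    rintro i ⟨n, rfl⟩ j ⟨m, rfl⟩ hlen x ⟨h1, h2⟩
    exact ⟨lt_of_le_of_lt hlen h1, fun i' hi' hle => h2 i' hi' (le_trans hle hlen)⟩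
  · -- length condition
    rintro j _ x ⟨h1, _⟩
    exact h1
  · -- cover region equality
    apply Set.Subset.antisymm
    · intro X hX
      simp only [coverRegion, Set.mem_iInter] at hX ⊢
      intro i hiI
      obtain ⟨x, ⟨hlen, hcov⟩, hpre⟩ := hX (List.replicate i.length false) ⟨i.length, rfl⟩
      obtain ⟨w, hwx, hwU⟩ := hcov i hiI (by rw [List.length_replicate])
      exact ⟨w, hwU, prefix_seq_mono hwx hpre⟩
    · intro X hX
      simp only [coverRegion, Set.mem_iInter] at hX ⊢
      rintro j ⟨n, rfl⟩
      have hfin : {i : List Bool | i ∈ I ∧ i.length ≤ n}.Finite :=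
        (List.finite_length_le Bool n).subset (fun i hi => hi.2)
      have hex : ∀ i : List Bool, ∃ m : ℕ, (i ∈ I ∧ i.length ≤ n) → pref X m ∈ U i := by
        intro i
        by_cases hi : i ∈ I ∧ i.length ≤ n
        · obtain ⟨w, hwU, hwpre⟩ := hX i hi.1
          exact ⟨w.length, fun _ => by rw [← prefixSeq_eq hwpre]; exact hwU⟩
        · exact ⟨0, fun hc => absurd hc hi⟩
      choose f hf using hex
      obtain ⟨M, hM⟩ := (hfin.image f).bddAbove
      refine ⟨pref X (max (n + 1) M), ⟨?_, ?_⟩, pref_isPrefixOfSeq X _⟩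
      · rw [pref_length, List.length_replicate]
        have := le_max_left (n + 1) M
        omega
      · intro i hiI hile
        rw [List.length_replicate] at hile
        have hfm : f i ≤ M := hM (Set.mem_image_of_mem f ⟨hiI, hile⟩)
        have hUm : pref X (f i) ∈ U i := hf i ⟨hiI, hile⟩
        exact ⟨pref X (f i), pref_mono X (le_trans hfm (le_max_right _ _)), hUm⟩
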